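/- (Triangulated Wakamatsu's Lemma) Suppose α : A → X is a 𝒞-cover, and complete α to a distinguished triangle K → A --α--> X → ΣK in 𝒯. Then Hom(C, ΣK) = 0 for every object C of 𝒞. -/

import Mathlib

open CategoryTheory CategoryTheory.Limits CategoryTheory.Pretriangulated

universe v u

variable {k : Type} [Field k]
variable {T : Type u} [Category.{v} T] [Preadditive T] [Linear k T]
  [HasZeroObject T] [HasShift T ℤ] [∀ n : ℤ, (shiftFunctor T n).Additive]
  [Pretriangulated T]

/-- `α : A ⟶ X` is an `S`-precover of `X`: `A` lies in `S` and every morphism from an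
object of `S` to `X` factors through `α`. -/
def IsPrecover (S : Set T) {A X : T} (α : A ⟶ X) : Prop :=
  A ∈ S ∧ ∀ A' : T, A' ∈ S → ∀ f : A' ⟶ X, ∃ g : A' ⟶ A, g ≫ α = f

/-- `α : A ⟶ X` is an `S`-cover: a right-minimal `S`-precover. -/
def IsCover (S : Set T) {A X : T} (α : A ⟶ X) : Prop :=
  IsPrecover S α ∧ ∀ f : A ⟶ A, f ≫ α = α → IsIso f

/-- **Triangulated Wakamatsu's Lemma.** If `α : A ⟶ X` is an `S`-cover and
`K ⟶ A ⟶ X ⟶ ΣK` is a distinguished triangle, then `Hom(C, ΣK) = 0` for every `C` in `S`. -/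
theorem wakamatsu_triangulated (S : Set T)
    -- `T` is skeletally small, idempotent complete, with finite-dimensional Hom spaces
    [EssentiallySmall.{v} T] [IsIdempotentComplete T]
    (hfd : ∀ X Y : T, FiniteDimensional k (X ⟶ Y))
    -- `S` is closed under isomorphisms, extensions and direct summands
    (hiso : ∀ {X Y : T}, (X ≅ Y) → X ∈ S → Y ∈ S)
    (hext : ∀ {A B C : T} (f : A ⟶ B) (g : B ⟶ C) (h : C ⟶ A⟦(1 : ℤ)⟧),
      Triangle.mk f g h ∈ (distTriang T) → A ∈ S → C ∈ S → B ∈ S)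
    (hsum : ∀ {A A₁ : T} (i : A₁ ⟶ A) (p : A ⟶ A₁), i ≫ p = 𝟙 A₁ → A ∈ S → A₁ ∈ S)
    {K A X : T} (α : A ⟶ X) (hα : IsCover S α)
    (f : K ⟶ A) (h : X ⟶ K⟦(1 : ℤ)⟧)
    (htri : Triangle.mk f α h ∈ distTriang T)
    (C : T) (hC : C ∈ S) (φ : C ⟶ K⟦(1 : ℤ)⟧) : φ = 0 := by
  obtain ⟨⟨hAS, hprec⟩, hmin⟩ := hα
  -- the connecting morphism for the extension triangle
  set w : C ⟶ A⟦(1 : ℤ)⟧ := -(φ ≫ f⟦(1 : ℤ)⟧') with hw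
  obtain ⟨B, i, p, htri'⟩ := Pretriangulated.distinguished_cocone_triangle₂ w
  have hBS : B ∈ S := hext i p w htri' hAS hC
  -- complete (𝟙 A, φ) to a morphism of triangles from (A,B,C) to (A,X,K⟦1⟧)
  have hrot : (Triangle.mk f α h).rotate ∈ distTriang T := rot_of_distTriang _ htri
  obtain ⟨β, hβ₁, hβ₂⟩ := complete_distinguished_triangle_morphism₂
    (Triangle.mk i p w) (Triangle.mk f α h).rotate htri' hrot (𝟙 A) φ (by
      show w ≫ (𝟙 A)⟦(1 : ℤ)⟧' = φ ≫ (-f⟦(1 : ℤ)⟧')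
      rw [CategoryTheory.Functor.map_id, Category.comp_id, hw, Preadditive.comp_neg])
  replace hβ₁ : i ≫ β = 𝟙 A ≫ α := hβ₁
  replace hβ₂ : p ≫ φ = β ≫ h := hβ₂
  rw [Category.id_comp] at hβ₁
  -- β : B ⟶ X factors through the precover α
  obtain ⟨γ, hγ⟩ := hprec B hBS β
  -- i ≫ γ : A ⟶ A satisfies (i ≫ γ) ≫ α = α, so it is an isomorphism
  have hiso' : IsIso (i ≫ γ) := hmin (i ≫ γ) (by rw [Category.assoc, hγ]; exact hβ₁)
  -- hence i is a split mono
  have hsplit : i ≫ (γ ≫ inv (i ≫ γ)) = 𝟙 A := by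
    rw [← Category.assoc, IsIso.hom_inv_id]
  -- w ≫ i⟦1⟧ = 0, hence w = 0
  have hw0 : w = 0 := by
    have h31 : w ≫ i⟦(1 : ℤ)⟧' = 0 :=
      comp_distTriang_mor_zero₃₁ (Triangle.mk i p w) htri'
    have : w ≫ (i ≫ (γ ≫ inv (i ≫ γ)))⟦(1 : ℤ)⟧' = 0 := by
      rw [Functor.map_comp, ← Category.assoc, h31, zero_comp]
    simpa [hsplit] using this
  -- so φ ≫ f⟦1⟧ = 0, hence φ factors through h
  have hφf : φ ≫ f⟦(1 : ℤ)⟧' = 0 := by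
    have := hw0
    rw [hw, neg_eq_zero] at this
    exact this
  obtain ⟨g, hg⟩ := Triangle.coyoneda_exact₁ _ htri φ hφf
  -- g : C ⟶ X factors through α, and α ≫ h = 0
  obtain ⟨g', hg'⟩ := hprec C hC g
  have hαh : α ≫ h = 0 := comp_distTriang_mor_zero₂₃ (Triangle.mk f α h) htri
  rw [hg]
  change g ≫ h = 0
  rw [← hg']
  change (g' ≫ α) ≫ h = 0
  rw [Category.assoc]
  rw [hαh, comp_zero]
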